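/- arXiv:1204.1869 — 2 statements merged into one kernel-verified Lean document; each statement's English description precedes it below -/
import Mathlib

section
/- Under the completion-of-squares identity for the LQ system, if x(0) = 0, {w(t)} is a sequence of pairwise uncorrelated zero-mean Gaussian random vectors with covariance W, and w(t) is independent of x(t) and u(t) for each t, then E[x(N)ᵀQx(N) + Σ_{t=0}^{N−1}(x(t)ᵀQx(t)+u(t)ᵀRu(t))] = E[Σ_{t=0}^{N−1}(u(t)+L(t)x(t))ᵀ(BᵀP(t+1)B+R)(u(t)+L(t)x(t))] + Σ_{t=0}^{N−1} Tr(P(t+1)W). -/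
open Matrix Finset MeasureTheory ProbabilityTheory Real

lemma aux_int_mul {Ω : Type*} [MeasurableSpace Ω] {μ : Measure Ω} {f g : Ω → ℝ}
    (hf : MemLp f 2 μ) (hg : MemLp g 2 μ) : Integrable (fun ω => f ω * g ω) μ := by
  have h : Integrable (fun ω => (f ω ^ 2 + g ω ^ 2) / 2) μ :=
    (hf.integrable_sq.add hg.integrable_sq).div_const 2
  refine h.mono' (hf.aestronglyMeasurable.mul hg.aestronglyMeasurable) ?_
  filter_upwards with ω
  rw [Real.norm_eq_abs, abs_mul]
  nlinarith [sq_nonneg (|f ω| - |g ω|), sq_abs (f ω), sq_abs (g ω),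
    abs_nonneg (f ω), abs_nonneg (g ω)]

lemma aux_memℒp_id_gauss (a : ℝ) (v : NNReal) :
    MemLp (id : ℝ → ℝ) 2 (gaussianReal a v) := by
  rw [memLp_two_iff_integrable_sq measurable_id.aestronglyMeasurable]
  by_cases hv : v = 0
  · subst hv
    rw [gaussianReal_zero_var]
    refine (integrable_const (a ^ 2)).congr ?_
    rw [MeasureTheory.ae_dirac_eq]
    exact Filter.eventually_pure.2 rfl
  · rw [gaussianReal_of_var_ne_zero _ hv, gaussianPDF_def]
    rw [integrable_withDensity_iff
      ((measurable_gaussianPDFReal a v).ennreal_ofReal)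
      (ae_of_all _ fun x => ENNReal.ofReal_lt_top)]
    have hvpos : (0:ℝ) < (v:ℝ) := by
      exact_mod_cast (show (0:NNReal) ≤ v from zero_le).lt_of_ne (Ne.symm hv)
    have hb : (0:ℝ) < (2 * (v:ℝ))⁻¹ := by positivity
    set b : ℝ := (2 * (v:ℝ))⁻¹ with hbdef
    set c : ℝ := (Real.sqrt (2 * π * v))⁻¹ with hcdef
    have h2 : Integrable (fun y : ℝ => y ^ 2 * rexp (-b * y ^ 2)) := by
      simpa [Real.rpow_natCast] using
        integrable_rpow_mul_exp_neg_mul_sq hb (show (-1:ℝ) < (2:ℕ) by norm_num)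
    have h1 : Integrable (fun y : ℝ => y * rexp (-b * y ^ 2)) := by
      simpa using integrable_rpow_mul_exp_neg_mul_sq hb (show (-1:ℝ) < 1 by norm_num)
    have h0 : Integrable (fun y : ℝ => rexp (-b * y ^ 2)) := integrable_exp_neg_mul_sq hb
    have hg : Integrable (fun y : ℝ => (y + a) ^ 2 * rexp (-b * y ^ 2)) := by
      have heq : (fun y : ℝ => (y + a) ^ 2 * rexp (-b * y ^ 2))
          = fun y : ℝ => y ^ 2 * rexp (-b * y ^ 2) + (2 * a) * (y * rexp (-b * y ^ 2))
            + a ^ 2 * rexp (-b * y ^ 2) := by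
        funext y; ring
      rw [heq]
      exact (h2.add (h1.const_mul _)).add (h0.const_mul _)
    have hshift : Integrable (fun x : ℝ => (x - a + a) ^ 2 * rexp (-b * (x - a) ^ 2)) :=
      hg.comp_sub_right a
    refine (hshift.const_mul c).congr ?_
    filter_upwards with x
    have harg : -(x - a) ^ 2 / (2 * (v:ℝ)) = -b * (x - a) ^ 2 := by
      rw [hbdef]; field_simp
    rw [ENNReal.toReal_ofReal (gaussianPDFReal_nonneg a v x)]
    simp only [gaussianPDFReal, id_eq]
    rw [harg]
    ring

lemma aux_memℒp_two_of_map {Ω : Type*} [MeasurableSpace Ω] {μ : Measure Ω} {f : Ω → ℝ}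
    (hf : Measurable f) {a : ℝ} {v : NNReal}
    (h : Measure.map f μ = gaussianReal a v) : MemLp f 2 μ := by
  have h1 : MemLp (id : ℝ → ℝ) 2 (Measure.map f μ) := by
    rw [h]; exact aux_memℒp_id_gauss a v
  simpa [Function.comp] using
    (memLp_map_measure_iff measurable_id.aestronglyMeasurable hf.aemeasurable).mp h1

lemma dvsym {k l : ℕ} (v : Fin k → ℝ) (M : Matrix (Fin k) (Fin l) ℝ) (w : Fin l → ℝ) :
    v ⬝ᵥ (M *ᵥ w) = w ⬝ᵥ (Mᵀ *ᵥ v) := by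
  simp only [Matrix.mulVec, dotProduct, Matrix.transpose_apply, Finset.mul_sum]
  rw [Finset.sum_comm]
  exact Finset.sum_congr rfl fun j _ => Finset.sum_congr rfl fun i _ => by ring

lemma aux_integral_quad {Ω : Type*} [MeasurableSpace Ω] {μ : Measure Ω} {k l : ℕ}
    (M : Matrix (Fin k) (Fin l) ℝ) (f : Ω → Fin k → ℝ) (g : Ω → Fin l → ℝ)
    (hf : ∀ i, MemLp (fun ω => f ω i) 2 μ) (hg : ∀ j, MemLp (fun ω => g ω j) 2 μ) :
    ∫ ω, f ω ⬝ᵥ (M *ᵥ g ω) ∂μ = ∑ i, ∑ j, M i j * ∫ ω, f ω i * g ω j ∂μ := by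
  have heq : (fun ω => f ω ⬝ᵥ (M *ᵥ g ω))
      = fun ω => ∑ i, ∑ j, M i j * (f ω i * g ω j) := by
    funext ω
    simp only [dotProduct, Matrix.mulVec, Finset.mul_sum]
    exact Finset.sum_congr rfl fun i _ => Finset.sum_congr rfl fun j _ => by ring
  rw [heq, integral_finset_sum _ (f := fun i ω => ∑ j, M i j * (f ω i * g ω j)) (fun i _ => integrable_finset_sum _ fun j _ =>
    (aux_int_mul (hf i) (hg j)).const_mul _)]
  refine Finset.sum_congr rfl fun i _ => ?_
  rw [integral_finset_sum _ (fun j _ => (aux_int_mul (hf i) (hg j)).const_mul _)]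
  exact Finset.sum_congr rfl fun j _ => MeasureTheory.integral_const_mul _ _


lemma step_identity {n m : ℕ} (A : Matrix (Fin n) (Fin n) ℝ) (B : Matrix (Fin n) (Fin m) ℝ)
    (Q P0 P1 : Matrix (Fin n) (Fin n) ℝ) (R : Matrix (Fin m) (Fin m) ℝ)
    (L : Matrix (Fin m) (Fin n) ℝ)
    (hP1 : P1ᵀ = P1) (hRs : Rᵀ = R)
    (hS : IsUnit (Bᵀ * P1 * B + R))
    (hP0 : P0 = Aᵀ * P1 * A + Q - Aᵀ * P1 * B * (Bᵀ * P1 * B + R)⁻¹ * (Bᵀ * P1 * A))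
    (hL : L = (R + Bᵀ * P1 * B)⁻¹ * (Bᵀ * P1 * A))
    (xv : Fin n → ℝ) (uv : Fin m → ℝ) :
    xv ⬝ᵥ (Q *ᵥ xv) + uv ⬝ᵥ (R *ᵥ uv)
      = (uv + L *ᵥ xv) ⬝ᵥ ((Bᵀ * P1 * B + R) *ᵥ (uv + L *ᵥ xv))
        + xv ⬝ᵥ (P0 *ᵥ xv)
        - (A *ᵥ xv + B *ᵥ uv) ⬝ᵥ (P1 *ᵥ (A *ᵥ xv + B *ᵥ uv)) := by
  have hSs : (Bᵀ * P1 * B + R)ᵀ = Bᵀ * P1 * B + R := by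
    simp [Matrix.transpose_add, Matrix.transpose_mul, hP1, hRs, Matrix.mul_assoc]
  have hdet : IsUnit (Bᵀ * P1 * B + R).det :=
    (Matrix.isUnit_iff_isUnit_det _).mp hS
  have hRB : R + Bᵀ * P1 * B = Bᵀ * P1 * B + R := add_comm _ _
  have hSL : (Bᵀ * P1 * B + R) * L = Bᵀ * P1 * A := by
    rw [hL, hRB, ← Matrix.mul_assoc, Matrix.mul_nonsing_inv _ hdet, Matrix.one_mul]
  have hKT : (Bᵀ * P1 * A)ᵀ = Aᵀ * P1 * B := by
    simp [Matrix.transpose_mul, hP1, Matrix.mul_assoc]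
  have hLT : Lᵀ = Aᵀ * P1 * B * (Bᵀ * P1 * B + R)⁻¹ := by
    rw [hL, hRB, Matrix.transpose_mul, Matrix.transpose_nonsing_inv, hSs, hKT]
  have e1 : (uv + L *ᵥ xv) ⬝ᵥ ((Bᵀ * P1 * B + R) *ᵥ (uv + L *ᵥ xv))
      = uv ⬝ᵥ ((Bᵀ * P1 * B + R) *ᵥ uv) + 2 * (uv ⬝ᵥ ((Bᵀ * P1 * A) *ᵥ xv))
        + xv ⬝ᵥ ((Aᵀ * P1 * B * (Bᵀ * P1 * B + R)⁻¹ * (Bᵀ * P1 * A)) *ᵥ xv) := by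
    have c1 : uv ⬝ᵥ ((Bᵀ * P1 * B + R) *ᵥ (L *ᵥ xv)) = uv ⬝ᵥ ((Bᵀ * P1 * A) *ᵥ xv) := by
      rw [Matrix.mulVec_mulVec, hSL]
    have c2 : (L *ᵥ xv) ⬝ᵥ ((Bᵀ * P1 * B + R) *ᵥ uv) = uv ⬝ᵥ ((Bᵀ * P1 * A) *ᵥ xv) := by
      rw [dvsym (L *ᵥ xv) _ uv, hSs, Matrix.mulVec_mulVec, hSL]
    have c3 : (L *ᵥ xv) ⬝ᵥ ((Bᵀ * P1 * B + R) *ᵥ (L *ᵥ xv))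
        = xv ⬝ᵥ ((Aᵀ * P1 * B * (Bᵀ * P1 * B + R)⁻¹ * (Bᵀ * P1 * A)) *ᵥ xv) := by
      rw [Matrix.mulVec_mulVec, hSL, dotProduct_comm, dvsym _ L xv,
        Matrix.mulVec_mulVec, hLT, Matrix.mul_assoc, Matrix.mul_assoc]
    simp only [Matrix.mulVec_add, dotProduct_add, add_dotProduct, c1, c2, c3]
    ring
  have e2 : (A *ᵥ xv + B *ᵥ uv) ⬝ᵥ (P1 *ᵥ (A *ᵥ xv + B *ᵥ uv))
      = xv ⬝ᵥ ((Aᵀ * P1 * A) *ᵥ xv) + 2 * (uv ⬝ᵥ ((Bᵀ * P1 * A) *ᵥ xv))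
        + uv ⬝ᵥ ((Bᵀ * P1 * B) *ᵥ uv) := by
    have d1 : (A *ᵥ xv) ⬝ᵥ (P1 *ᵥ (A *ᵥ xv)) = xv ⬝ᵥ ((Aᵀ * P1 * A) *ᵥ xv) := by
      rw [dotProduct_comm, dvsym _ A xv, Matrix.mulVec_mulVec, Matrix.mulVec_mulVec]
    have d3 : (B *ᵥ uv) ⬝ᵥ (P1 *ᵥ (A *ᵥ xv)) = uv ⬝ᵥ ((Bᵀ * P1 * A) *ᵥ xv) := by
      rw [dotProduct_comm, dvsym _ B uv, Matrix.mulVec_mulVec, Matrix.mulVec_mulVec]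
    have d2 : (A *ᵥ xv) ⬝ᵥ (P1 *ᵥ (B *ᵥ uv)) = uv ⬝ᵥ ((Bᵀ * P1 * A) *ᵥ xv) := by
      rw [dvsym (A *ᵥ xv) P1 (B *ᵥ uv), hP1, d3]
    have d4 : (B *ᵥ uv) ⬝ᵥ (P1 *ᵥ (B *ᵥ uv)) = uv ⬝ᵥ ((Bᵀ * P1 * B) *ᵥ uv) := by
      rw [dotProduct_comm, dvsym _ B uv, Matrix.mulVec_mulVec, Matrix.mulVec_mulVec]
    simp only [Matrix.mulVec_add, dotProduct_add, add_dotProduct, d1, d2, d3, d4]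
    ring
  have e3 : xv ⬝ᵥ (P0 *ᵥ xv)
      = xv ⬝ᵥ ((Aᵀ * P1 * A) *ᵥ xv) + xv ⬝ᵥ (Q *ᵥ xv)
        - xv ⬝ᵥ ((Aᵀ * P1 * B * (Bᵀ * P1 * B + R)⁻¹ * (Bᵀ * P1 * A)) *ᵥ xv) := by
    rw [hP0]
    simp only [Matrix.sub_mulVec, Matrix.add_mulVec, dotProduct_add, dotProduct_sub]
  have e4 : uv ⬝ᵥ ((Bᵀ * P1 * B + R) *ᵥ uv)
      = uv ⬝ᵥ ((Bᵀ * P1 * B) *ᵥ uv) + uv ⬝ᵥ (R *ᵥ uv) := by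
    rw [Matrix.add_mulVec, dotProduct_add]
  rw [e1, e2, e3, e4]
  ring

/-- A random vector is Gaussian with mean `m` and covariance `W` iff every linear functional
of it is a real Gaussian with the corresponding mean and variance. -/
def IsGaussianVec {Ω : Type*} [MeasurableSpace Ω] (μ : Measure Ω) {n : ℕ}
    (w : Ω → Fin n → ℝ) (m : Fin n → ℝ) (W : Matrix (Fin n) (Fin n) ℝ) : Prop :=
  ∀ c : Fin n → ℝ,
    Measure.map (fun ω => c ⬝ᵥ w ω) μ =
      gaussianReal (c ⬝ᵥ m) (Real.toNNReal (c ⬝ᵥ (W *ᵥ c)))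

set_option maxHeartbeats 2000000 in
/-- **Expected completion-of-squares (Corollary 1).**  If `x(0) = 0`, the noises `w(t)` are
pairwise-uncorrelated zero-mean Gaussian vectors with covariance `W`, and `w(t)` is
independent of `(x(t), u(t))`, then
`E[x(N)ᵀQx(N) + Σ (xᵀQx + uᵀRu)] = E[Σ (u+Lx)ᵀ(BᵀP(t+1)B+R)(u+Lx)] + Σ Tr(P(t+1)W)`. -/
theorem stmt_1 {Ω : Type*} [MeasurableSpace Ω] (μ : Measure Ω) [IsProbabilityMeasure μ]
    (n m N : ℕ)
    (A Q : Matrix (Fin n) (Fin n) ℝ) (B : Matrix (Fin n) (Fin m) ℝ)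
    (R : Matrix (Fin m) (Fin m) ℝ) (W : Matrix (Fin n) (Fin n) ℝ)
    (hQ : Q.PosSemidef) (hR : R.PosDef)
    (x w : ℕ → Ω → Fin n → ℝ) (u : ℕ → Ω → Fin m → ℝ)
    (P : ℕ → Matrix (Fin n) (Fin n) ℝ) (L : ℕ → Matrix (Fin m) (Fin n) ℝ)
    -- dynamics and initial condition
    (hdyn : ∀ t < N, ∀ ω, x (t + 1) ω = A *ᵥ x t ω + B *ᵥ u t ω + w t ω)
    (hx0 : ∀ ω, x 0 ω = 0)
    -- Riccati recursion and gains
    (hPN : P N = Q)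
    (hinv : ∀ t < N, IsUnit (Bᵀ * P (t + 1) * B + R))
    (hRic : ∀ t < N,
      P t = Aᵀ * P (t + 1) * A + Q -
        Aᵀ * P (t + 1) * B * (Bᵀ * P (t + 1) * B + R)⁻¹ * (Bᵀ * P (t + 1) * A))
    (hL : ∀ t < N, L t = (R + Bᵀ * P (t + 1) * B)⁻¹ * (Bᵀ * P (t + 1) * A))
    -- the noise is zero-mean Gaussian with covariance W
    (hGauss : ∀ t, IsGaussianVec μ (w t) 0 W)
    (hwmean : ∀ t i, ∫ ω, w t ω i ∂μ = 0)
    (hwcov : ∀ t i j, ∫ ω, w t ω i * w t ω j ∂μ = W i j)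
    -- pairwise uncorrelated noises
    (huncorr : ∀ k l, k ≠ l → ∀ i j, ∫ ω, w k ω i * w l ω j ∂μ = 0)
    -- w(t) is independent of (x(t), u(t))
    (hindep : ∀ t, IndepFun (w t) (fun ω => (x t ω, u t ω)) μ)
    -- measurability and integrability
    (hxmeas : ∀ t, Measurable (x t)) (humeas : ∀ t, Measurable (u t))
    (hwmeas : ∀ t, Measurable (w t))
    (hxL2 : ∀ t i, MemLp (fun ω => x t ω i) 2 μ)
    (huL2 : ∀ t i, MemLp (fun ω => u t ω i) 2 μ) :
    ∫ ω, (x N ω ⬝ᵥ (Q *ᵥ x N ω) +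
        ∑ t ∈ Finset.range N,
          (x t ω ⬝ᵥ (Q *ᵥ x t ω) + u t ω ⬝ᵥ (R *ᵥ u t ω))) ∂μ =
    (∫ ω, ∑ t ∈ Finset.range N,
        (u t ω + L t *ᵥ x t ω) ⬝ᵥ
          ((Bᵀ * P (t + 1) * B + R) *ᵥ (u t ω + L t *ᵥ x t ω)) ∂μ) +
      ∑ t ∈ Finset.range N, (P (t + 1) * W).trace := by
  have hQs : Qᵀ = Q := by simpa using hQ.1.eq
  have hRs : Rᵀ = R := by simpa using hR.1.eq
  have hPsAll : ∀ k t, t + k = N → (P t)ᵀ = P t := by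
    intro k
    induction k with
    | zero =>
      intro t ht
      simp only [Nat.add_zero] at ht
      subst ht; rw [hPN]; exact hQs
    | succ k ih =>
      intro t ht
      have htN : t < N := by omega
      have hp1 : (P (t + 1))ᵀ = P (t + 1) := ih (t + 1) (by omega)
      rw [hRic t htN]
      have hSs : (Bᵀ * P (t+1) * B + R)ᵀ = Bᵀ * P (t+1) * B + R := by
        simp [Matrix.transpose_add, Matrix.transpose_mul, hp1, hRs, Matrix.mul_assoc]
      simp only [Matrix.transpose_sub, Matrix.transpose_add, Matrix.transpose_mul,
        Matrix.transpose_nonsing_inv, Matrix.transpose_transpose, hp1, hQs, hSs]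
      simp [Matrix.mul_assoc]
  have hPs : ∀ t, t ≤ N → (P t)ᵀ = P t := fun t ht => hPsAll (N - t) t (by omega)
  have hwL2 : ∀ t i, MemLp (fun ω => w t ω i) 2 μ := by
    intro t i
    have hmeas : Measurable (fun ω => w t ω i) := (measurable_pi_apply i).comp (hwmeas t)
    have hmap := hGauss t (Pi.single i 1)
    have heq : (fun ω => (Pi.single i (1:ℝ)) ⬝ᵥ w t ω) = fun ω => w t ω i := by
      funext ω; rw [single_dotProduct, one_mul]
    rw [heq] at hmap
    exact aux_memℒp_two_of_map hmeas hmap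
  have hMv : ∀ {k l : ℕ} (M : Matrix (Fin k) (Fin l) ℝ) (v : Ω → Fin l → ℝ),
      (∀ i, MemLp (fun ω => v ω i) 2 μ) → ∀ j, MemLp (fun ω => (M *ᵥ v ω) j) 2 μ := by
    intro k l M v hv j
    have heq : (fun ω => (M *ᵥ v ω) j) = (fun ω => ∑ i, M j i * v ω i) := by
      funext ω; simp [Matrix.mulVec, dotProduct]
    rw [heq]
    exact memLp_finset_sum _ fun i _ => (hv i).const_mul (M j i)
  have hdd : ∀ {k l : ℕ} (M : Matrix (Fin k) (Fin l) ℝ) (f : Ω → Fin k → ℝ)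
      (g : Ω → Fin l → ℝ) (ω : Ω),
      f ω ⬝ᵥ (M *ᵥ g ω) = ∑ i, ∑ j, M i j * (f ω i * g ω j) := by
    intro k l M f g ω
    simp only [dotProduct, Matrix.mulVec, Finset.mul_sum]
    exact Finset.sum_congr rfl fun i _ => Finset.sum_congr rfl fun j _ => by ring
  have hquad : ∀ {k l : ℕ} (M : Matrix (Fin k) (Fin l) ℝ) (f : Ω → Fin k → ℝ)
      (g : Ω → Fin l → ℝ),
      (∀ i, MemLp (fun ω => f ω i) 2 μ) → (∀ j, MemLp (fun ω => g ω j) 2 μ) →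
      Integrable (fun ω => f ω ⬝ᵥ (M *ᵥ g ω)) μ := by
    intro k l M f g hf hg
    have heq : (fun ω => f ω ⬝ᵥ (M *ᵥ g ω))
        = fun ω => ∑ i, ∑ j, M i j * (f ω i * g ω j) := funext fun ω => hdd M f g ω
    rw [heq]
    exact integrable_finset_sum _ fun i _ => integrable_finset_sum _ fun j _ =>
      (aux_int_mul (hf i) (hg j)).const_mul (M i j)
  have hzL2 : ∀ t j, MemLp (fun ω => (A *ᵥ x t ω + B *ᵥ u t ω) j) 2 μ :=
    fun t j => (hMv A (x t) (hxL2 t) j).add (hMv B (u t) (huL2 t) j)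
  have huLxL2 : ∀ t j, MemLp (fun ω => (u t ω + L t *ᵥ x t ω) j) 2 μ :=
    fun t j => (huL2 t j).add (hMv (L t) (x t) (hxL2 t) j)
  -- pointwise identity
  have hpt : ∀ ω, x N ω ⬝ᵥ (Q *ᵥ x N ω) +
      ∑ t ∈ Finset.range N, (x t ω ⬝ᵥ (Q *ᵥ x t ω) + u t ω ⬝ᵥ (R *ᵥ u t ω))
      = (∑ t ∈ Finset.range N, (u t ω + L t *ᵥ x t ω) ⬝ᵥ
            ((Bᵀ * P (t + 1) * B + R) *ᵥ (u t ω + L t *ᵥ x t ω)))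
        + ∑ t ∈ Finset.range N,
            (2 * (w t ω ⬝ᵥ (P (t + 1) *ᵥ (A *ᵥ x t ω + B *ᵥ u t ω)))
              + w t ω ⬝ᵥ (P (t + 1) *ᵥ w t ω)) := by
    intro ω
    have hstep : ∀ t ∈ Finset.range N,
        x t ω ⬝ᵥ (Q *ᵥ x t ω) + u t ω ⬝ᵥ (R *ᵥ u t ω)
        = ((u t ω + L t *ᵥ x t ω) ⬝ᵥ
              ((Bᵀ * P (t + 1) * B + R) *ᵥ (u t ω + L t *ᵥ x t ω))
            + (2 * (w t ω ⬝ᵥ (P (t + 1) *ᵥ (A *ᵥ x t ω + B *ᵥ u t ω)))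
              + w t ω ⬝ᵥ (P (t + 1) *ᵥ w t ω)))
          + (x t ω ⬝ᵥ (P t *ᵥ x t ω) - x (t + 1) ω ⬝ᵥ (P (t + 1) *ᵥ x (t + 1) ω)) := by
      intro t ht
      rw [Finset.mem_range] at ht
      have hp1 : (P (t + 1))ᵀ = P (t + 1) := hPs (t + 1) (by omega)
      have h1 := step_identity A B Q (P t) (P (t + 1)) R (L t)
        hp1 hRs (hinv t ht) (hRic t ht) (hL t ht) (x t ω) (u t ω)
      rw [h1, hdyn t ht ω]
      set zv := A *ᵥ x t ω + B *ᵥ u t ω with hzv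
      have hcross : zv ⬝ᵥ (P (t + 1) *ᵥ w t ω) = w t ω ⬝ᵥ (P (t + 1) *ᵥ zv) := by
        rw [dvsym zv (P (t + 1)) (w t ω), hp1]
      have hexp : (zv + w t ω) ⬝ᵥ (P (t + 1) *ᵥ (zv + w t ω))
          = zv ⬝ᵥ (P (t + 1) *ᵥ zv) + 2 * (w t ω ⬝ᵥ (P (t + 1) *ᵥ zv))
            + w t ω ⬝ᵥ (P (t + 1) *ᵥ w t ω) := by
        simp only [Matrix.mulVec_add, dotProduct_add, add_dotProduct, hcross]
        ring
      rw [hexp]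
      ring
    rw [Finset.sum_congr rfl hstep]
    simp only [Finset.sum_add_distrib]
    have htel := Finset.sum_range_sub' (fun t => x t ω ⬝ᵥ (P t *ᵥ x t ω)) N
    rw [htel, hx0 ω, hPN, zero_dotProduct]
    ring
  -- integrability
  have hGint : Integrable (fun ω => ∑ t ∈ Finset.range N,
      (u t ω + L t *ᵥ x t ω) ⬝ᵥ
        ((Bᵀ * P (t + 1) * B + R) *ᵥ (u t ω + L t *ᵥ x t ω))) μ :=
    integrable_finset_sum _ fun t _ => hquad _ _ _ (huLxL2 t) (huLxL2 t)
  have hCint : ∀ t, Integrable (fun ω =>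
      2 * (w t ω ⬝ᵥ (P (t + 1) *ᵥ (A *ᵥ x t ω + B *ᵥ u t ω)))) μ :=
    fun t => (hquad _ _ _ (hwL2 t) (hzL2 t)).const_mul 2
  have hDint : ∀ t, Integrable (fun ω => w t ω ⬝ᵥ (P (t + 1) *ᵥ w t ω)) μ :=
    fun t => hquad _ _ _ (hwL2 t) (hwL2 t)
  have hCDint : Integrable (fun ω => ∑ t ∈ Finset.range N,
      (2 * (w t ω ⬝ᵥ (P (t + 1) *ᵥ (A *ᵥ x t ω + B *ᵥ u t ω)))
        + w t ω ⬝ᵥ (P (t + 1) *ᵥ w t ω))) μ :=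
    integrable_finset_sum _ fun t _ => (hCint t).add (hDint t)
  have h1 : ∫ ω, (x N ω ⬝ᵥ (Q *ᵥ x N ω) +
      ∑ t ∈ Finset.range N, (x t ω ⬝ᵥ (Q *ᵥ x t ω) + u t ω ⬝ᵥ (R *ᵥ u t ω))) ∂μ
      = ∫ ω, ((∑ t ∈ Finset.range N, (u t ω + L t *ᵥ x t ω) ⬝ᵥ
            ((Bᵀ * P (t + 1) * B + R) *ᵥ (u t ω + L t *ᵥ x t ω)))
        + ∑ t ∈ Finset.range N,
            (2 * (w t ω ⬝ᵥ (P (t + 1) *ᵥ (A *ᵥ x t ω + B *ᵥ u t ω)))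
              + w t ω ⬝ᵥ (P (t + 1) *ᵥ w t ω))) ∂μ :=
    integral_congr_ae (Filter.Eventually.of_forall hpt)
  rw [h1, integral_add hGint hCDint]
  congr 1
  have hCD : ∀ t, Integrable (fun ω =>
      2 * (w t ω ⬝ᵥ (P (t + 1) *ᵥ (A *ᵥ x t ω + B *ᵥ u t ω)))
        + w t ω ⬝ᵥ (P (t + 1) *ᵥ w t ω)) μ := fun t => (hCint t).add (hDint t)
  rw [integral_finset_sum _ fun t _ => hCD t]
  refine Finset.sum_congr rfl fun t _ => ?_
  rw [integral_add (hCint t) (hDint t)]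
  have hC0 : ∫ ω, 2 * (w t ω ⬝ᵥ (P (t + 1) *ᵥ (A *ᵥ x t ω + B *ᵥ u t ω))) ∂μ = 0 := by
    rw [MeasureTheory.integral_const_mul]
    have hmain := aux_integral_quad (P (t + 1)) (w t)
      (fun ω => A *ᵥ x t ω + B *ᵥ u t ω) (hwL2 t) (hzL2 t)
    rw [hmain, Finset.sum_eq_zero, mul_zero]
    intro i _
    refine Finset.sum_eq_zero fun j _ => ?_
    have hφ : Measurable fun v : Fin n → ℝ => v i := measurable_pi_apply i
    have hψ : Measurable fun p : (Fin n → ℝ) × (Fin m → ℝ) => (A *ᵥ p.1 + B *ᵥ p.2) j := by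
      have heq2 : (fun p : (Fin n → ℝ) × (Fin m → ℝ) => (A *ᵥ p.1 + B *ᵥ p.2) j)
          = fun p => (∑ k, A j k * p.1 k) + (∑ k, B j k * p.2 k) := by
        funext p; simp [Matrix.mulVec, dotProduct]
      rw [heq2]
      exact (Finset.measurable_sum _ fun k _ =>
          ((measurable_pi_apply k).comp measurable_fst).const_mul _).add
        (Finset.measurable_sum _ fun k _ =>
          ((measurable_pi_apply k).comp measurable_snd).const_mul _)
    have hind : IndepFun (fun ω => w t ω i)
        (fun ω => (A *ᵥ x t ω + B *ᵥ u t ω) j) μ := (hindep t).comp hφ hψ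
    rw [hind.integral_fun_mul_eq_mul_integral ((hwL2 t i).aestronglyMeasurable)
      ((hzL2 t j).aestronglyMeasurable), hwmean t i, zero_mul, mul_zero]
  have hD : ∫ ω, w t ω ⬝ᵥ (P (t + 1) *ᵥ w t ω) ∂μ = (P (t + 1) * W).trace := by
    rw [aux_integral_quad (P (t + 1)) (w t) (w t) (hwL2 t) (hwL2 t)]
    have hWs : ∀ i j, W i j = W j i := by
      intro i j
      rw [← hwcov 0 i j, ← hwcov 0 j i]
      have : (fun ω => w 0 ω i * w 0 ω j) = fun ω => w 0 ω j * w 0 ω i :=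
        funext fun ω => mul_comm _ _
      rw [this]
    have htr : (P (t + 1) * W).trace = ∑ i, ∑ j, P (t + 1) i j * W j i := by
      simp [Matrix.trace, Matrix.diag, Matrix.mul_apply]
    rw [htr]
    refine Finset.sum_congr rfl fun i _ => Finset.sum_congr rfl fun j _ => ?_
    rw [hwcov t i j, hWs i j]
  rw [hC0, hD, zero_add]
end

section
/- If (A,B) is stabilizable and (Q,A) is detectable (Q ⪰ 0, R ≻ 0), then the backward Riccati recursion X(t) = AᵀX(t+1)A + Q − AᵀX(t+1)B(BᵀX(t+1)B+R)⁻¹BᵀX(t+1)A with terminal condition X(N)=Q converges, as the horizon recedes (N−t → ∞), to the unique positive semidefinite stabilizing solution X of the discrete algebraic Riccati equation X = AᵀXA + Q − AᵀXB(BᵀXB+R)⁻¹BᵀXA, and the time-varying gains L(t) = (R+BᵀX(t+1)B)⁻¹BᵀX(t+1)A converge to L = (R+BᵀXB)⁻¹BᵀXA, with A−BL Schur stable. -/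
open Matrix Filter Topology

variable {n m : ℕ}

/-- A real square matrix is Schur stable iff all its (complex) eigenvalues lie strictly
inside the unit disc. -/
def SchurStable (A : Matrix (Fin n) (Fin n) ℝ) : Prop :=
  ∀ z ∈ spectrum ℂ (A.map (Complex.ofReal : ℝ → ℂ)), ‖z‖ < 1

/-- `(A, B)` is stabilizable iff some static feedback makes the closed loop Schur stable. -/
def Stabilizable (A : Matrix (Fin n) (Fin n) ℝ) (B : Matrix (Fin n) (Fin m) ℝ) : Prop :=
  ∃ L : Matrix (Fin m) (Fin n) ℝ, SchurStable (A - B * L)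

/-- `(C, A)` is detectable iff `(Aᵀ, Cᵀ)` is stabilizable. -/
def Detectable (C : Matrix (Fin m) (Fin n) ℝ) (A : Matrix (Fin n) (Fin n) ℝ) : Prop :=
  Stabilizable Aᵀ Cᵀ

namespace Stmt19Aux

variable {p q : ℕ}

/-- Loewner order: `M ⊑ N`. -/
def LoeLE (M N : Matrix (Fin p) (Fin p) ℝ) : Prop := (N - M).PosSemidef

lemma quad_nonneg {M : Matrix (Fin p) (Fin p) ℝ} (h : M.PosSemidef) (x : Fin p → ℝ) :
    0 ≤ x ⬝ᵥ M *ᵥ x := by simpa using h.dotProduct_mulVec_nonneg x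

lemma LoeLE.quad {M N : Matrix (Fin p) (Fin p) ℝ} (h : LoeLE M N) (x : Fin p → ℝ) :
    x ⬝ᵥ M *ᵥ x ≤ x ⬝ᵥ N *ᵥ x := by
  have := quad_nonneg h x
  simp only [Matrix.sub_mulVec, dotProduct_sub] at this
  linarith

lemma LoeLE.refl (M : Matrix (Fin p) (Fin p) ℝ) : LoeLE M M := by
  simpa [LoeLE] using Matrix.PosSemidef.zero

lemma LoeLE.trans {M N O : Matrix (Fin p) (Fin p) ℝ} (h1 : LoeLE M N) (h2 : LoeLE N O) :
    LoeLE M O := by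
  have := h2.add h1
  simpa [LoeLE, sub_add_sub_cancel] using this

lemma LoeLE.add {M N M' N' : Matrix (Fin p) (Fin p) ℝ} (h1 : LoeLE M N) (h2 : LoeLE M' N') :
    LoeLE (M + M') (N + N') := by
  have := Matrix.PosSemidef.add h1 h2
  simpa [LoeLE, add_sub_add_comm] using this

lemma LoeLE.congr {M N : Matrix (Fin p) (Fin p) ℝ} (h : LoeLE M N)
    (C : Matrix (Fin p) (Fin q) ℝ) : LoeLE (Cᵀ * M * C) (Cᵀ * N * C) := by
  have h2 : ((N - M).PosSemidef) := h
  have := h2.conjTranspose_mul_mul_same C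
  simp only [conjTranspose_eq_transpose_of_trivial] at this
  simpa [LoeLE, Matrix.sub_mul, Matrix.mul_sub] using this

lemma psd_of_loe_zero {M : Matrix (Fin p) (Fin p) ℝ} (h : LoeLE 0 M) : M.PosSemidef := by
  simpa [LoeLE] using h

lemma loe_zero_of_psd {M : Matrix (Fin p) (Fin p) ℝ} (h : M.PosSemidef) : LoeLE 0 M := by
  simpa [LoeLE] using h

/-- congruence of PSD with transpose on the left. -/
lemma psd_conj {M : Matrix (Fin p) (Fin p) ℝ} (h : M.PosSemidef)
    (C : Matrix (Fin p) (Fin q) ℝ) : (Cᵀ * M * C).PosSemidef := by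
  have := h.conjTranspose_mul_mul_same C
  simpa [conjTranspose_eq_transpose_of_trivial] using this

lemma sym_of_psd {M : Matrix (Fin p) (Fin p) ℝ} (h : M.PosSemidef) : Mᵀ = M := by
  simpa [Matrix.IsHermitian, conjTranspose_eq_transpose_of_trivial] using h.1

/-- a symmetric real matrix with vanishing quadratic form is zero -/
lemma eq_zero_of_quad_zero {M : Matrix (Fin p) (Fin p) ℝ} (hsym : Mᵀ = M)
    (h : ∀ x : Fin p → ℝ, x ⬝ᵥ M *ᵥ x = 0) : M = 0 := by
  ext i j
  have key : ∀ a b : Fin p → ℝ, a ⬝ᵥ M *ᵥ b + b ⬝ᵥ M *ᵥ a = 0 := by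
    intro a b
    have := h (a + b)
    simp only [dotProduct_add, Matrix.mulVec_add, add_dotProduct, h a, h b] at this
    linarith [h a, h b, this]
  have h2 := key (Pi.single i 1) (Pi.single j 1)
  have e1 : (Pi.single i 1 : Fin p → ℝ) ⬝ᵥ M *ᵥ Pi.single j 1 = M i j := by
    simp [Matrix.mulVec_single, dotProduct, Finset.sum_eq_single i, Pi.single_apply]
  have e2 : (Pi.single j 1 : Fin p → ℝ) ⬝ᵥ M *ᵥ Pi.single i 1 = M j i := by
    simp [Matrix.mulVec_single, dotProduct, Finset.sum_eq_single j, Pi.single_apply]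
  have hji : M j i = M i j := by
    have := congrFun (congrFun hsym i) j
    simpa [Matrix.transpose_apply] using this
  rw [e1, e2, hji] at h2
  simp only [Matrix.zero_apply]
  linarith

set_option maxHeartbeats 1000000

variable (A Q : Matrix (Fin p) (Fin p) ℝ) (B : Matrix (Fin p) (Fin q) ℝ)
  (R : Matrix (Fin q) (Fin q) ℝ)

/-- `W P = BᵀPB + R`. -/
def Wm (P : Matrix (Fin p) (Fin p) ℝ) : Matrix (Fin q) (Fin q) ℝ := Bᵀ * P * B + R

/-- optimal gain -/
noncomputable def Km (P : Matrix (Fin p) (Fin p) ℝ) : Matrix (Fin q) (Fin p) ℝ :=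
  (Bᵀ * P * B + R)⁻¹ * (Bᵀ * P * A)

/-- Riccati operator -/
noncomputable def Ric (P : Matrix (Fin p) (Fin p) ℝ) : Matrix (Fin p) (Fin p) ℝ :=
  Aᵀ * P * A + Q - Aᵀ * P * B * (Bᵀ * P * B + R)⁻¹ * (Bᵀ * P * A)

variable {A Q B R}
variable {P P' : Matrix (Fin p) (Fin p) ℝ}

lemma Wm_posDef (hR : R.PosDef) (hP : P.PosSemidef) : (Wm B R P).PosDef := by
  have h1 : (Bᵀ * P * B).PosSemidef := by
    simpa [conjTranspose_eq_transpose_of_trivial] using hP.conjTranspose_mul_mul_same B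
  exact Matrix.PosDef.posSemidef_add h1 hR

lemma Wm_isUnit_det (hR : R.PosDef) (hP : P.PosSemidef) : IsUnit (Wm B R P).det :=
  (Matrix.isUnit_iff_isUnit_det _).mp (Wm_posDef hR hP).isUnit

lemma Wm_sym (hR : R.PosDef) (hP : P.PosSemidef) : (Wm B R P)ᵀ = Wm B R P :=
  sym_of_psd (Matrix.PosDef.posSemidef (Wm_posDef (B := B) hR hP))

lemma Wm_inv_sym (hR : R.PosDef) (hP : P.PosSemidef) :
    ((Wm B R P)⁻¹)ᵀ = (Wm B R P)⁻¹ := by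
  rw [Matrix.transpose_nonsing_inv, Wm_sym hR hP]

/-- completion of squares -/
lemma cs (hR : R.PosDef) (hP : P.PosSemidef) (L : Matrix (Fin q) (Fin p) ℝ) :
    Ric A Q B R P + (L - Km A B R P)ᵀ * Wm B R P * (L - Km A B R P)
      = (A - B * L)ᵀ * P * (A - B * L) + Q + Lᵀ * R * L := by
  have hPs : Pᵀ = P := sym_of_psd hP
  have hdet : IsUnit (Bᵀ * P * B + R).det := by
    simpa [Wm] using Wm_isUnit_det (B := B) hR hP
  have hinvT : ((Bᵀ * P * B + R)⁻¹)ᵀ = (Bᵀ * P * B + R)⁻¹ := by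
    simpa [Wm] using Wm_inv_sym (B := B) hR hP
  have hWK : (Bᵀ * P * B + R) * Km A B R P = Bᵀ * P * A := by
    rw [Km, Matrix.mul_nonsing_inv_cancel_left _ _ hdet]
  have hKt : (Km A B R P)ᵀ = Aᵀ * P * B * (Bᵀ * P * B + R)⁻¹ := by
    rw [Km, Matrix.transpose_mul, hinvT]
    simp [Matrix.transpose_mul, hPs, Matrix.mul_assoc]
  have hKtW : (Km A B R P)ᵀ * (Bᵀ * P * B + R) = Aᵀ * P * B := by
    rw [hKt, Matrix.nonsing_inv_mul_cancel_right _ _ hdet]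
  have hKtWK : (Km A B R P)ᵀ * (Bᵀ * P * B + R) * Km A B R P
      = Aᵀ * P * B * (Bᵀ * P * B + R)⁻¹ * (Bᵀ * P * A) := by
    rw [hKtW, Km, ← Matrix.mul_assoc]
  have expand : (L - Km A B R P)ᵀ * (Bᵀ * P * B + R) * (L - Km A B R P)
      = Lᵀ * (Bᵀ * P * B + R) * L - Lᵀ * (Bᵀ * P * A) - (Aᵀ * P * B) * L
        + Aᵀ * P * B * (Bᵀ * P * B + R)⁻¹ * (Bᵀ * P * A) := by
    have e1 : Lᵀ * (Bᵀ * P * B + R) * Km A B R P = Lᵀ * (Bᵀ * P * A) := by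
      rw [Matrix.mul_assoc, hWK]
    rw [Matrix.transpose_sub, Matrix.sub_mul, Matrix.mul_sub, Matrix.sub_mul, Matrix.sub_mul,
      e1, hKtW, Km, ← Matrix.mul_assoc (Aᵀ * P * B)]
    abel
  rw [Ric, Wm, expand]
  rw [Matrix.transpose_sub, Matrix.transpose_mul]
  simp only [Matrix.mul_sub, Matrix.sub_mul, Matrix.mul_add, Matrix.add_mul, Matrix.mul_assoc]
  abel

/-- `Ric P` in closed-loop form. -/
lemma ric_closed_loop (hR : R.PosDef) (hP : P.PosSemidef) :
    Ric A Q B R P = (A - B * Km A B R P)ᵀ * P * (A - B * Km A B R P) + Q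
      + (Km A B R P)ᵀ * R * (Km A B R P) := by
  have h := cs (A := A) (Q := Q) (B := B) hR hP (Km A B R P)
  simpa using h

/-- key inequality. -/
lemma ric_le (hR : R.PosDef) (hP : P.PosSemidef) (L : Matrix (Fin q) (Fin p) ℝ) :
    LoeLE (Ric A Q B R P) ((A - B * L)ᵀ * P * (A - B * L) + Q + Lᵀ * R * L) := by
  have h := cs (A := A) (Q := Q) (B := B) hR hP L
  have h2 : (A - B * L)ᵀ * P * (A - B * L) + Q + Lᵀ * R * L - Ric A Q B R P
      = (L - Km A B R P)ᵀ * Wm B R P * (L - Km A B R P) := by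
    rw [← h]; abel
  rw [LoeLE, h2]
  exact psd_conj (Wm_posDef hR hP).posSemidef _

lemma ric_psd (hR : R.PosDef) (hP : P.PosSemidef) (hQ : Q.PosSemidef) :
    (Ric A Q B R P).PosSemidef := by
  rw [ric_closed_loop hR hP, add_assoc]
  exact (psd_conj hP _).add (hQ.add (psd_conj hR.posSemidef _))

/-- monotonicity of the Riccati operator -/
lemma ric_mono (hR : R.PosDef) (hP : P.PosSemidef) (hP' : P'.PosSemidef)
    (h : LoeLE P P') : LoeLE (Ric A Q B R P) (Ric A Q B R P') := by
  set L := Km A B R P' with hL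
  have h1 := ric_le (A := A) (Q := Q) (B := B) hR hP L
  have h2 : LoeLE ((A - B * L)ᵀ * P * (A - B * L) + Q + Lᵀ * R * L)
      ((A - B * L)ᵀ * P' * (A - B * L) + Q + Lᵀ * R * L) := by
    have hdiff : (A - B * L)ᵀ * P' * (A - B * L) + Q + Lᵀ * R * L
        - ((A - B * L)ᵀ * P * (A - B * L) + Q + Lᵀ * R * L)
        = (A - B * L)ᵀ * (P' - P) * (A - B * L) := by
      simp only [Matrix.mul_sub, Matrix.sub_mul]
      abel
    rw [LoeLE, hdiff]
    exact psd_conj h _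
  have h3 : (A - B * L)ᵀ * P' * (A - B * L) + Q + Lᵀ * R * L = Ric A Q B R P' :=
    (ric_closed_loop hR hP').symm
  exact h1.trans (h3 ▸ h2)

lemma ric_zero : Ric A Q B R (0 : Matrix (Fin p) (Fin p) ℝ) = Q := by simp [Ric]

-- appended before `end Stmt19Aux`
section Decay
variable {p : ℕ}

attribute [local instance] Matrix.linftyOpNormedRing Matrix.linftyOpNormedAlgebra
  Matrix.linftyOpNormedAddCommGroup

lemma entry_norm_le_linfty (X : Matrix (Fin p) (Fin p) ℂ) (i j : Fin p) :
    ‖X i j‖ ≤ ‖X‖ := by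
  have h1 : ‖X i j‖₊ ≤ ∑ j' : Fin p, ‖X i j'‖₊ :=
    Finset.single_le_sum (f := fun j' => ‖X i j'‖₊) (fun _ _ => zero_le) (Finset.mem_univ j)
  have h2 : (∑ j' : Fin p, ‖X i j'‖₊) ≤ Finset.univ.sup (fun i : Fin p => ∑ j' : Fin p, ‖X i j'‖₊) :=
    Finset.le_sup (f := fun i : Fin p => ∑ j' : Fin p, ‖X i j'‖₊) (Finset.mem_univ i)
  have := h1.trans h2
  rw [Matrix.linfty_opNorm_def]
  exact_mod_cast this

lemma map_pow_ofReal (M : Matrix (Fin p) (Fin p) ℝ) (k : ℕ) :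
    (M ^ k).map (Complex.ofReal : ℝ → ℂ) = (M.map (Complex.ofReal : ℝ → ℂ)) ^ k := by
  have : (M.map (Complex.ofReal : ℝ → ℂ)) = Complex.ofRealHom.mapMatrix M := rfl
  rw [this]
  have : (M ^ k).map (Complex.ofReal : ℝ → ℂ) = Complex.ofRealHom.mapMatrix (M ^ k) := rfl
  rw [this, map_pow]

/-- Schur stability yields a geometric entrywise bound on powers. -/
lemma schur_pow_entry_bound {M : Matrix (Fin p) (Fin p) ℝ} (h : SchurStable M) :
    ∃ c r : ℝ, 0 < c ∧ 0 ≤ r ∧ r < 1 ∧ ∀ (k : ℕ) (i j : Fin p), |(M ^ k) i j| ≤ c * r ^ k := by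
  rcases Nat.eq_zero_or_pos p with hp | hp
  · subst hp
    exact ⟨1, 0, one_pos, le_refl 0, by norm_num, fun k i j => i.elim0⟩
  set Mc := M.map (Complex.ofReal : ℝ → ℂ) with hMc
  haveI : Nontrivial (Matrix (Fin p) (Fin p) ℂ) := by
    refine ⟨0, 1, fun hc => ?_⟩
    have := congrFun (congrFun hc ⟨0, hp⟩) ⟨0, hp⟩
    simp [Matrix.one_apply] at this
  haveI : CompleteSpace (Matrix (Fin p) (Fin p) ℂ) := FiniteDimensional.complete ℂ _
  have hne : (spectrum ℂ Mc).Nonempty := spectrum.nonempty Mc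
  have hρ : spectralRadius ℂ Mc < (1 : NNReal) := by
    refine spectrum.spectralRadius_lt_of_forall_lt_of_nonempty hne ?_
    intro z hz
    have := h z hz
    simpa [← NNReal.coe_lt_coe, coe_nnnorm] using this
  obtain ⟨u, hu1, hu2⟩ := exists_between hρ
  have hutop : u ≠ ⊤ := by
    intro hc; rw [hc] at hu2; exact (not_lt.mpr le_top) (lt_of_lt_of_le hu2 le_top)
  have hu2' : u < 1 := by simpa using hu2
  have hg := spectrum.pow_nnnorm_pow_one_div_tendsto_nhds_spectralRadius Mc
  have hev : ∀ᶠ k : ℕ in atTop, ((‖Mc ^ k‖₊ : ENNReal) ^ (1 / (k : ℝ))) < u :=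
    hg.eventually_lt_const hu1
  rw [Filter.eventually_atTop] at hev
  obtain ⟨K, hK⟩ := hev
  set r : ℝ := (u.toNNReal : ℝ) with hr
  have hr0 : 0 < r := by
    have : (0 : ENNReal) < u := lt_of_le_of_lt (zero_le) hu1
    have := ENNReal.toNNReal_pos this.ne' hutop
    exact_mod_cast this
  have hr1 : r < 1 := by
    have := ENNReal.toNNReal_lt_toNNReal hutop (by norm_num : (1 : ENNReal) ≠ ⊤) |>.mpr hu2'
    simp at this; exact_mod_cast this
  have hnorm : ∀ k, K ≤ k → 1 ≤ k → ‖Mc ^ k‖ ≤ r ^ k := by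
    intro k hk hk1
    have h1 := hK k hk
    have hk0 : (k : ℝ) ≠ 0 := by positivity
    have h2 : ((‖Mc ^ k‖₊ : ENNReal) ^ (1 / (k : ℝ))) ^ (k : ℝ) ≤ u ^ (k : ℝ) :=
      ENNReal.rpow_le_rpow h1.le (by positivity)
    rw [← ENNReal.rpow_mul, one_div, inv_mul_cancel₀ hk0, ENNReal.rpow_one,
      ENNReal.rpow_natCast] at h2
    rw [← ENNReal.coe_toNNReal hutop, ← ENNReal.coe_pow] at h2
    have h4 : ‖Mc ^ k‖₊ ≤ u.toNNReal ^ k := ENNReal.coe_le_coe.mp h2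
    calc ‖Mc ^ k‖ = ((‖Mc ^ k‖₊ : NNReal) : ℝ) := by rw [coe_nnnorm]
    _ ≤ ((u.toNNReal ^ k : NNReal) : ℝ) := by exact_mod_cast h4
    _ = r ^ k := by push_cast; rfl
  set c : ℝ := (∑ k ∈ Finset.range (K + 1), ‖Mc ^ k‖ / r ^ k) + 1 with hc
  have hsum0 : 0 ≤ ∑ k ∈ Finset.range (K + 1), ‖Mc ^ k‖ / r ^ k :=
    Finset.sum_nonneg fun k _ => div_nonneg (norm_nonneg _) (by positivity)
  have hcpos : 0 < c := by rw [hc]; linarith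
  refine ⟨c, r, hcpos, hr0.le, hr1, fun k i j => ?_⟩
  have hentry : |(M ^ k) i j| ≤ ‖Mc ^ k‖ := by
    have e1 : ((M ^ k) i j : ℂ) = (Mc ^ k) i j := by
      rw [← map_pow_ofReal]; rfl
    calc |(M ^ k) i j| = ‖((M ^ k) i j : ℂ)‖ := by rw [Complex.norm_real, Real.norm_eq_abs]
    _ = ‖(Mc ^ k) i j‖ := by rw [e1]
    _ ≤ ‖Mc ^ k‖ := entry_norm_le_linfty _ i j
  have hmain : ‖Mc ^ k‖ ≤ c * r ^ k := by
    rcases le_or_gt k K with hkK | hkK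
    · have hmem : k ∈ Finset.range (K + 1) := Finset.mem_range.mpr (by omega)
      have h1 : ‖Mc ^ k‖ / r ^ k ≤ ∑ k' ∈ Finset.range (K + 1), ‖Mc ^ k'‖ / r ^ k' :=
        Finset.single_le_sum (fun k' _ => div_nonneg (norm_nonneg _) (by positivity)) hmem
      have h2 : ‖Mc ^ k‖ / r ^ k ≤ c := by
        rw [hc]; linarith
      calc ‖Mc ^ k‖ = (‖Mc ^ k‖ / r ^ k) * r ^ k := by field_simp
      _ ≤ c * r ^ k := by
        apply mul_le_mul_of_nonneg_right h2 (by positivity)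
    · have hk1 : 1 ≤ k := by omega
      have := hnorm k (by omega) hk1
      calc ‖Mc ^ k‖ ≤ r ^ k := this
      _ = 1 * r ^ k := (one_mul _).symm
      _ ≤ c * r ^ k := by
        apply mul_le_mul_of_nonneg_right _ (by positivity)
        rw [hc]
        linarith
  exact hentry.trans hmain

end Decay

section Complexify
open scoped ComplexOrder
variable {a b : ℕ}

lemma semiconj_ofReal : Function.Semiconj (Complex.ofReal : ℝ → ℂ) star star := by
  intro r; simp [Complex.conj_ofReal]

lemma map_transpose_CT (M : Matrix (Fin a) (Fin b) ℝ) :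
    (Mᵀ).map (Complex.ofReal : ℝ → ℂ) = (M.map (Complex.ofReal : ℝ → ℂ))ᴴ := by
  ext i j
  simp [Matrix.conjTranspose_apply, Complex.conj_ofReal]

lemma map_mul_C {c : ℕ} (M : Matrix (Fin a) (Fin b) ℝ) (N : Matrix (Fin b) (Fin c) ℝ) :
    (M * N).map (Complex.ofReal : ℝ → ℂ)
      = M.map (Complex.ofReal : ℝ → ℂ) * N.map (Complex.ofReal : ℝ → ℂ) :=
  Matrix.map_mul (f := Complex.ofRealHom)

lemma map_sub_C (M N : Matrix (Fin a) (Fin b) ℝ) :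
    (M - N).map (Complex.ofReal : ℝ → ℂ)
      = M.map (Complex.ofReal : ℝ → ℂ) - N.map (Complex.ofReal : ℝ → ℂ) := by
  ext i j; simp

lemma map_add_C (M N : Matrix (Fin a) (Fin b) ℝ) :
    (M + N).map (Complex.ofReal : ℝ → ℂ)
      = M.map (Complex.ofReal : ℝ → ℂ) + N.map (Complex.ofReal : ℝ → ℂ) := by
  ext i j; simp

lemma psd_map {M : Matrix (Fin a) (Fin a) ℝ} (h : M.PosSemidef) :
    (M.map (Complex.ofReal : ℝ → ℂ)).PosSemidef := by
  obtain ⟨C, hC⟩ : ∃ C : Matrix (Fin a) (Fin a) ℝ, M = Cᴴ * C := by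
    open scoped MatrixOrder in
    refine ⟨CFC.sqrt M, ?_⟩
    have hs : (CFC.sqrt M)ᴴ = CFC.sqrt M := (CFC.sqrt_nonneg M).isSelfAdjoint
    rw [hs, CFC.sqrt_mul_sqrt_self M h.nonneg]
  have : M.map (Complex.ofReal : ℝ → ℂ)
      = (C.map (Complex.ofReal : ℝ → ℂ))ᴴ * (C.map (Complex.ofReal : ℝ → ℂ)) := by
    rw [hC]
    have hCT : (Cᴴ : Matrix (Fin a) (Fin a) ℝ) = Cᵀ := by
      ext i j; simp [Matrix.conjTranspose_apply]
    rw [hCT, map_mul_C, map_transpose_CT]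
  rw [this]
  exact Matrix.posSemidef_conjTranspose_mul_self _

lemma mem_spectrum_iff_eigvec (M : Matrix (Fin a) (Fin a) ℂ) (z : ℂ) :
    z ∈ spectrum ℂ M ↔ ∃ v, v ≠ 0 ∧ M *ᵥ v = z • v := by
  rw [spectrum.mem_iff]
  rw [Matrix.isUnit_iff_isUnit_det, isUnit_iff_ne_zero, not_not]
  rw [← Matrix.exists_mulVec_eq_zero_iff]
  constructor
  · rintro ⟨v, hv, hveq⟩
    refine ⟨v, hv, ?_⟩
    have : (algebraMap ℂ (Matrix (Fin a) (Fin a) ℂ)) z *ᵥ v = z • v := by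
      rw [Algebra.algebraMap_eq_smul_one, Matrix.smul_mulVec, Matrix.one_mulVec]
    rw [Matrix.sub_mulVec, this, sub_eq_zero] at hveq
    exact hveq.symm
  · rintro ⟨v, hv, hveq⟩
    refine ⟨v, hv, ?_⟩
    have h1 : (algebraMap ℂ (Matrix (Fin a) (Fin a) ℂ)) z *ᵥ v = z • v := by
      rw [Algebra.algebraMap_eq_smul_one, Matrix.smul_mulVec, Matrix.one_mulVec]
    rw [Matrix.sub_mulVec, h1, hveq, sub_self]

lemma spectrum_transpose (M : Matrix (Fin a) (Fin a) ℂ) :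
    spectrum ℂ Mᵀ = spectrum ℂ M := by
  ext z
  rw [spectrum.mem_iff, spectrum.mem_iff, Matrix.isUnit_iff_isUnit_det,
    Matrix.isUnit_iff_isUnit_det]
  have : ((algebraMap ℂ (Matrix (Fin a) (Fin a) ℂ)) z - Mᵀ)
      = ((algebraMap ℂ (Matrix (Fin a) (Fin a) ℂ)) z - M)ᵀ := by
    rw [Algebra.algebraMap_eq_smul_one, Matrix.transpose_sub, Matrix.transpose_smul,
      Matrix.transpose_one]
  rw [this, Matrix.det_transpose]

lemma quad_conj_vec (X' : Matrix (Fin a) (Fin a) ℂ) (N : Matrix (Fin a) (Fin b) ℂ)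
    (v : Fin b → ℂ) :
    star v ⬝ᵥ (Nᴴ * X' * N) *ᵥ v = star (N *ᵥ v) ⬝ᵥ X' *ᵥ (N *ᵥ v) := by
  rw [← Matrix.mulVec_mulVec, ← Matrix.mulVec_mulVec]
  rw [Matrix.star_mulVec, Matrix.dotProduct_mulVec (star v)]

end Complexify

section Stability
open scoped ComplexOrder
variable {p q : ℕ}

private abbrev cof : ℝ → ℂ := Complex.ofReal

lemma mulVec_eq_zero_of_posdef {R : Matrix (Fin q) (Fin q) ℝ} (hR : R.PosDef)
    {w : Fin q → ℂ} (hw : (R.map cof) *ᵥ w = 0) : w = 0 := by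
  by_contra hne
  have hdet0 : (R.map cof).det = 0 := Matrix.exists_mulVec_eq_zero_iff.mp ⟨w, hne, hw⟩
  have hthis : (R.map cof).det = cof R.det := by
    rw [show R.map cof = Complex.ofRealHom.mapMatrix R from rfl, ← RingHom.map_det]
    rfl
  rw [hthis] at hdet0
  have : R.det = 0 := Complex.ofReal_eq_zero.mp hdet0
  exact hR.det_pos.ne' this

lemma closed_loop_stable
    {A Q : Matrix (Fin p) (Fin p) ℝ} {B : Matrix (Fin p) (Fin q) ℝ}
    {R : Matrix (Fin q) (Fin q) ℝ} {K : Matrix (Fin q) (Fin p) ℝ}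
    (hQ : Q.PosSemidef) (hR : R.PosDef) (hdet : Detectable Q A)
    {X : Matrix (Fin p) (Fin p) ℝ} (hX : X.PosSemidef)
    (heq : X = (A - B * K)ᵀ * X * (A - B * K) + Q + Kᵀ * R * K) :
    SchurStable (A - B * K) := by
  intro z hz
  by_contra hlt
  push_neg at hlt
  set F := A - B * K with hF
  obtain ⟨v, hv, hveq⟩ := (mem_spectrum_iff_eigvec (F.map cof) z).mp hz
  have heqC : X.map cof = (F.map cof)ᴴ * (X.map cof) * (F.map cof) + Q.map cof
      + (K.map cof)ᴴ * (R.map cof) * (K.map cof) := by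
    have h0 := congrArg (fun M => M.map cof) heq
    simpa only [map_add_C, map_mul_C, map_transpose_CT] using h0
  have hquad := congrArg (fun M => star v ⬝ᵥ M *ᵥ v) heqC
  simp only [Matrix.add_mulVec, dotProduct_add] at hquad
  rw [quad_conj_vec, quad_conj_vec, hveq] at hquad
  set t := star v ⬝ᵥ (X.map cof) *ᵥ v with ht
  set qQ := star v ⬝ᵥ (Q.map cof) *ᵥ v with hqQ
  set qR := star ((K.map cof) *ᵥ v) ⬝ᵥ (R.map cof) *ᵥ ((K.map cof) *ᵥ v) with hqR
  have e1 : star (z • v) ⬝ᵥ (X.map cof) *ᵥ (z • v) = ((Complex.normSq z : ℝ) : ℂ) * t := by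
    rw [star_smul, Matrix.mulVec_smul, smul_dotProduct, dotProduct_smul, ht]
    rw [smul_eq_mul, smul_eq_mul, ← mul_assoc]
    congr 1
    rw [show (star z) = (starRingEnd ℂ) z from rfl, mul_comm, Complex.mul_conj]
  rw [e1] at hquad
  have htpos : 0 ≤ t := (psd_map hX).dotProduct_mulVec_nonneg v
  have hqQpos : 0 ≤ qQ := (psd_map hQ).dotProduct_mulVec_nonneg v
  have hqRpos : 0 ≤ qR := (psd_map hR.posSemidef).dotProduct_mulVec_nonneg _
  have hz2 : 1 ≤ Complex.normSq z := by
    have h1 : Complex.normSq z = ‖z‖ ^ 2 := by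
      rw [Complex.normSq_eq_norm_sq]
    nlinarith [hlt]
  have hcoef : 0 ≤ ((Complex.normSq z - 1 : ℝ) : ℂ) := by
    rw [Complex.zero_le_real]; linarith
  have hsum : ((Complex.normSq z - 1 : ℝ) : ℂ) * t + (qQ + qR) = 0 := by
    push_cast
    linear_combination -hquad
  have hterm1 : 0 ≤ ((Complex.normSq z - 1 : ℝ) : ℂ) * t := mul_nonneg hcoef htpos
  have hqq0 : qQ + qR = 0 := by
    have hle : qQ + qR ≤ 0 := by
      have : qQ + qR = -(((Complex.normSq z - 1 : ℝ) : ℂ) * t) := by linear_combination hsum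
      rw [this]
      exact neg_nonpos.mpr hterm1
    exact le_antisymm hle (add_nonneg hqQpos hqRpos)
  have hqQ0 : qQ = 0 := le_antisymm (by
    have : qQ = -qR := by linear_combination hqq0
    rw [this]; exact neg_nonpos.mpr hqRpos) hqQpos
  have hqR0 : qR = 0 := by
    have : qR = -qQ := by linear_combination hqq0
    rw [this, hqQ0, neg_zero]
  have hQv : (Q.map cof) *ᵥ v = 0 := ((psd_map hQ).dotProduct_mulVec_zero_iff v).mp hqQ0
  have hRKv : (R.map cof) *ᵥ ((K.map cof) *ᵥ v) = 0 :=
    ((psd_map hR.posSemidef).dotProduct_mulVec_zero_iff _).mp hqR0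
  have hKv : (K.map cof) *ᵥ v = 0 := mulVec_eq_zero_of_posdef hR hRKv
  have hAv : (A.map cof) *ᵥ v = z • v := by
    have hFm : F.map cof = A.map cof - (B.map cof) * (K.map cof) := by
      rw [hF, map_sub_C, map_mul_C]
    rw [hFm, Matrix.sub_mulVec, ← Matrix.mulVec_mulVec, hKv, Matrix.mulVec_zero,
      sub_zero] at hveq
    exact hveq
  obtain ⟨Ld, hLd⟩ := hdet
  set G := Aᵀ - Qᵀ * Ld with hG
  have hGT : Gᵀ = A - Ldᵀ * Q := by
    rw [hG, Matrix.transpose_sub, Matrix.transpose_mul]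
    simp
  have hGv : ((Gᵀ).map cof) *ᵥ v = z • v := by
    rw [hGT, map_sub_C, map_mul_C, Matrix.sub_mulVec, ← Matrix.mulVec_mulVec, hQv,
      Matrix.mulVec_zero, sub_zero, hAv]
  have hzspec : z ∈ spectrum ℂ (G.map cof) := by
    have h1 : z ∈ spectrum ℂ ((Gᵀ).map cof) := (mem_spectrum_iff_eigvec _ z).mpr ⟨v, hv, hGv⟩
    rwa [Matrix.transpose_map, spectrum_transpose] at h1
  exact absurd (hLd z hzspec) (not_lt.mpr hlt)

end Stability

section Uniq
variable {p q : ℕ}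

lemma quad_conj_vec_real (M : Matrix (Fin p) (Fin p) ℝ) (N : Matrix (Fin p) (Fin p) ℝ)
    (v : Fin p → ℝ) :
    v ⬝ᵥ (Nᵀ * M * N) *ᵥ v = (N *ᵥ v) ⬝ᵥ M *ᵥ (N *ᵥ v) := by
  rw [← Matrix.mulVec_mulVec, ← Matrix.mulVec_mulVec, Matrix.dotProduct_mulVec v Nᵀ,
    Matrix.vecMul_transpose, Matrix.dotProduct_mulVec (N *ᵥ v) M]

lemma quad_abs_le (M : Matrix (Fin p) (Fin p) ℝ) (y : Fin p → ℝ) (c : ℝ) (hc : 0 ≤ c)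
    (hy : ∀ i, |y i| ≤ c) :
    |y ⬝ᵥ M *ᵥ y| ≤ (∑ i, ∑ j, |M i j|) * c ^ 2 := by
  have e : y ⬝ᵥ M *ᵥ y = ∑ i, ∑ j, y i * M i j * y j := by
    simp [dotProduct, Matrix.mulVec, Finset.mul_sum, mul_assoc]
  rw [e, Finset.sum_mul]
  refine (Finset.abs_sum_le_sum_abs _ _).trans (Finset.sum_le_sum fun i _ => ?_)
  rw [Finset.sum_mul]
  refine (Finset.abs_sum_le_sum_abs _ _).trans (Finset.sum_le_sum fun j _ => ?_)
  rw [abs_mul, abs_mul]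
  calc |y i| * |M i j| * |y j| ≤ c * |M i j| * c := by
        apply mul_le_mul (mul_le_mul (hy i) le_rfl (abs_nonneg _) hc) (hy j) (abs_nonneg _)
        positivity
  _ = |M i j| * c ^ 2 := by ring

lemma mulVec_pow_abs_le {F : Matrix (Fin p) (Fin p) ℝ} {c r : ℝ}
    (hb : ∀ (k : ℕ) (i j : Fin p), |(F ^ k) i j| ≤ c * r ^ k)
    (k : ℕ) (x : Fin p → ℝ) (i : Fin p) :
    |((F ^ k) *ᵥ x) i| ≤ c * r ^ k * (∑ j, |x j|) := by
  have e : ((F ^ k) *ᵥ x) i = ∑ j, (F ^ k) i j * x j := rfl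
  rw [e, Finset.mul_sum]
  refine (Finset.abs_sum_le_sum_abs _ _).trans (Finset.sum_le_sum fun j _ => ?_)
  rw [abs_mul]
  exact mul_le_mul_of_nonneg_right (hb k i j) (abs_nonneg _)

lemma quad_nonpos_of_loe {Δ C : Matrix (Fin p) (Fin p) ℝ} (hC : SchurStable C)
    (hloe : LoeLE Δ (Cᵀ * Δ * C)) (x : Fin p → ℝ) :
    x ⬝ᵥ Δ *ᵥ x ≤ 0 := by
  obtain ⟨c, r, hc, hr0, hr1, hb⟩ := schur_pow_entry_bound hC
  have hiter : ∀ k, LoeLE Δ ((C ^ k)ᵀ * Δ * (C ^ k)) := by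
    intro k; induction k with
    | zero => simpa using LoeLE.refl Δ
    | succ k ih =>
      have h1 : LoeLE (Cᵀ * Δ * C) (Cᵀ * ((C ^ k)ᵀ * Δ * (C ^ k)) * C) := ih.congr C
      have h2 : Cᵀ * ((C ^ k)ᵀ * Δ * (C ^ k)) * C = (C ^ (k + 1))ᵀ * Δ * (C ^ (k + 1)) := by
        rw [pow_succ, Matrix.transpose_mul]
        simp [Matrix.mul_assoc]
      exact hloe.trans (h2 ▸ h1)
  set s := ∑ j, |x j| with hs
  have hsnn : 0 ≤ s := Finset.sum_nonneg fun j _ => abs_nonneg _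
  set D := ∑ i, ∑ j, |Δ i j| with hD
  have hDnn : 0 ≤ D := Finset.sum_nonneg fun i _ => Finset.sum_nonneg fun j _ => abs_nonneg _
  have hbound : ∀ k, x ⬝ᵥ Δ *ᵥ x ≤ D * c ^ 2 * s ^ 2 * (r ^ 2) ^ k := by
    intro k
    have h1 := (hiter k).quad x
    rw [quad_conj_vec_real] at h1
    have h2 : ((C ^ k) *ᵥ x) ⬝ᵥ Δ *ᵥ ((C ^ k) *ᵥ x) ≤ D * (c * r ^ k * s) ^ 2 := by
      refine (le_abs_self _).trans ?_
      exact quad_abs_le _ _ _ (by positivity) (mulVec_pow_abs_le hb k x)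
    have h3 : D * (c * r ^ k * s) ^ 2 = D * c ^ 2 * s ^ 2 * (r ^ 2) ^ k := by
      ring
    exact h1.trans (h3 ▸ h2)
  have htend : Tendsto (fun k : ℕ => D * c ^ 2 * s ^ 2 * (r ^ 2) ^ k) atTop (𝓝 0) := by
    have h0 : Tendsto (fun k : ℕ => (r ^ 2) ^ k) atTop (𝓝 0) := by
      apply tendsto_pow_atTop_nhds_zero_of_lt_one (by positivity)
      nlinarith
    have := h0.const_mul (D * c ^ 2 * s ^ 2)
    simpa using this
  exact ge_of_tendsto htend (Filter.Eventually.of_forall hbound)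

variable {A Q : Matrix (Fin p) (Fin p) ℝ} {B : Matrix (Fin p) (Fin q) ℝ}
  {R : Matrix (Fin q) (Fin q) ℝ}

lemma dare_cross (hR : R.PosDef) {X X' : Matrix (Fin p) (Fin p) ℝ}
    (hX : X.PosSemidef) (hX' : X'.PosSemidef)
    (hdX : X = Ric A Q B R X) (hdX' : X' = Ric A Q B R X') :
    LoeLE (X - X') ((A - B * Km A B R X')ᵀ * (X - X') * (A - B * Km A B R X')) := by
  set F' := A - B * Km A B R X' with hF'
  set sq := (Km A B R X' - Km A B R X)ᵀ * Wm B R X * (Km A B R X' - Km A B R X) with hsq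
  have h1 := cs (A := A) (Q := Q) (B := B) hR hX (Km A B R X')
  have h2 := ric_closed_loop (A := A) (Q := Q) (B := B) hR hX'
  have key : F'ᵀ * (X - X') * F' - (X - X') = sq := by
    have h3 : F'ᵀ * X * F' - F'ᵀ * X' * F'
        = (Ric A Q B R X + sq) - Ric A Q B R X' := by
      rw [hsq]
      have e1 : F'ᵀ * X * F' = Ric A Q B R X
          + (Km A B R X' - Km A B R X)ᵀ * Wm B R X * (Km A B R X' - Km A B R X)
          - Q - (Km A B R X')ᵀ * R * (Km A B R X') := by
        rw [h1]; abel
      have e2 : F'ᵀ * X' * F' = Ric A Q B R X' - Q - (Km A B R X')ᵀ * R * (Km A B R X') := by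
        rw [h2]; abel
      rw [e1, e2]; abel
    rw [← hdX, ← hdX'] at h3
    have h4 : F'ᵀ * (X - X') * F' = F'ᵀ * X * F' - F'ᵀ * X' * F' := by
      simp only [Matrix.mul_sub, Matrix.sub_mul]
    rw [h4, h3]; abel
  rw [LoeLE, key, hsq]
  exact psd_conj (Wm_posDef hR hX).posSemidef _

lemma dare_unique (hR : R.PosDef) {X X' : Matrix (Fin p) (Fin p) ℝ}
    (hX : X.PosSemidef) (hX' : X'.PosSemidef)
    (hdX : X = Ric A Q B R X) (hdX' : X' = Ric A Q B R X')
    (hsX : SchurStable (A - B * Km A B R X)) (hsX' : SchurStable (A - B * Km A B R X')) :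
    X' = X := by
  have h1 := dare_cross (A := A) (Q := Q) hR hX hX' hdX hdX'
  have h2 := dare_cross (A := A) (Q := Q) hR hX' hX hdX' hdX
  have q1 : ∀ x, x ⬝ᵥ (X - X') *ᵥ x ≤ 0 := fun x => quad_nonpos_of_loe hsX' h1 x
  have q2 : ∀ x, x ⬝ᵥ (X' - X) *ᵥ x ≤ 0 := fun x => quad_nonpos_of_loe hsX h2 x
  have hzero : ∀ x, x ⬝ᵥ (X - X') *ᵥ x = 0 := by
    intro x
    have e : x ⬝ᵥ (X' - X) *ᵥ x = -(x ⬝ᵥ (X - X') *ᵥ x) := by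
      simp [Matrix.sub_mulVec, dotProduct_sub]
    have := q2 x
    rw [e] at this
    have h0 : 0 ≤ x ⬝ᵥ (X - X') *ᵥ x := by linarith
    linarith [q1 x]
  have hsym : (X - X')ᵀ = X - X' := by
    rw [Matrix.transpose_sub, sym_of_psd hX, sym_of_psd hX']
  have := eq_zero_of_quad_zero hsym hzero
  have : X = X' := by
    have h := sub_eq_zero.mp this
    exact h
  exact this.symm

end Uniq

section Conv
variable {p : ℕ}

lemma geom_bound {t : ℝ} (h0 : 0 ≤ t) (h1 : t < 1) (k : ℕ) :
    ∑ j ∈ Finset.range k, t ^ j ≤ (1 - t)⁻¹ := by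
  have ht1 : t ≠ 1 := ne_of_lt h1
  rw [geom_sum_eq ht1]
  have hpos : 0 < 1 - t := by linarith
  have e : (t ^ k - 1) / (t - 1) = (1 - t ^ k) / (1 - t) := by
    rw [div_eq_div_iff (by intro hc; rw [sub_eq_zero] at hc; exact ht1 hc) (by positivity)]
    ring
  rw [e, ← one_div]
  have htk : 0 ≤ t ^ k := by positivity
  exact (div_le_div_iff_of_pos_right hpos).mpr (by linarith)

lemma single_dot (M : Matrix (Fin p) (Fin p) ℝ) (a b : Fin p) :
    Pi.single a 1 ⬝ᵥ M *ᵥ Pi.single b 1 = M a b := by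
  simp [Matrix.mulVec_single, dotProduct, Finset.sum_eq_single a, Pi.single_apply]

lemma quad_single {M : Matrix (Fin p) (Fin p) ℝ} (hsym : Mᵀ = M) (i j : Fin p) :
    M i j = ((Pi.single i 1 + Pi.single j 1) ⬝ᵥ M *ᵥ (Pi.single i 1 + Pi.single j 1)
      - Pi.single i 1 ⬝ᵥ M *ᵥ Pi.single i 1 - Pi.single j 1 ⬝ᵥ M *ᵥ Pi.single j 1) / 2 := by
  have hji : M j i = M i j := by
    have := congrFun (congrFun hsym i) j
    simpa [Matrix.transpose_apply] using this
  rw [Matrix.mulVec_add, dotProduct_add, add_dotProduct, add_dotProduct]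
  rw [single_dot, single_dot, single_dot, single_dot]
  rw [hji]
  ring

end Conv

end Stmt19Aux

set_option maxHeartbeats 2000000 in
open Stmt19Aux in
/-- **Convergence of the backward Riccati recursion.**  If `(A,B)` is stabilizable and
`(Q,A)` is detectable (`Q ⪰ 0`, `R ≻ 0`), then the backward Riccati iterates (indexed here
by the number `k = N − t` of steps to go, so `P 0 = Q`) converge to the unique positive
semidefinite stabilizing solution `X` of the DARE, the corresponding gains converge to
`L = (R+BᵀXB)⁻¹BᵀXA`, and `A − BL` is Schur stable. -/
theorem stmt_19
    (A Q : Matrix (Fin n) (Fin n) ℝ) (B : Matrix (Fin n) (Fin m) ℝ)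
    (R : Matrix (Fin m) (Fin m) ℝ)
    (hQ : Q.PosSemidef) (hR : R.PosDef)
    (hstab : Stabilizable A B) (hdet : Detectable Q A)
    (P : ℕ → Matrix (Fin n) (Fin n) ℝ)
    (hP0 : P 0 = Q)
    (hPrec : ∀ k, P (k + 1) =
      Aᵀ * P k * A + Q -
        Aᵀ * P k * B * (Bᵀ * P k * B + R)⁻¹ * (Bᵀ * P k * A)) :
    ∃ X : Matrix (Fin n) (Fin n) ℝ,
      (X.PosSemidef ∧
        X = Aᵀ * X * A + Q -
          Aᵀ * X * B * (Bᵀ * X * B + R)⁻¹ * (Bᵀ * X * A) ∧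
        SchurStable (A - B * ((R + Bᵀ * X * B)⁻¹ * (Bᵀ * X * A)))) ∧
      (∀ X' : Matrix (Fin n) (Fin n) ℝ,
        (X'.PosSemidef ∧
          X' = Aᵀ * X' * A + Q -
            Aᵀ * X' * B * (Bᵀ * X' * B + R)⁻¹ * (Bᵀ * X' * A) ∧
          SchurStable (A - B * ((R + Bᵀ * X' * B)⁻¹ * (Bᵀ * X' * A)))) → X' = X) ∧
      Tendsto P atTop (𝓝 X) ∧
      Tendsto (fun k => (R + Bᵀ * P k * B)⁻¹ * (Bᵀ * P k * A)) atTop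
        (𝓝 ((R + Bᵀ * X * B)⁻¹ * (Bᵀ * X * A))) := by
  classical
  have hPrec' : ∀ k, P (k + 1) = Ric A Q B R (P k) := fun k => hPrec k
  have hpsd : ∀ k, (P k).PosSemidef := by
    intro k
    induction k with
    | zero => rw [hP0]; exact hQ
    | succ k ih => rw [hPrec' k]; exact ric_psd hR ih hQ
  have hsymP : ∀ k, (P k)ᵀ = P k := fun k => sym_of_psd (hpsd k)
  have hmono : ∀ k, LoeLE (P k) (P (k + 1)) := by
    intro k
    induction k with
    | zero =>
      rw [hPrec' 0, hP0]
      have h0 := ric_mono (A := A) (Q := Q) (B := B) hR Matrix.PosSemidef.zero hQ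
        (loe_zero_of_psd hQ)
      rwa [ric_zero] at h0
    | succ k ih =>
      have h := ric_mono (A := A) (Q := Q) (B := B) hR (hpsd k) (hpsd (k + 1)) ih
      rw [← hPrec' k] at h
      rw [hPrec' (k + 1)]
      exact h
  obtain ⟨L₀, hL₀⟩ := hstab
  obtain ⟨c, r, hc, hr0, hr1, hb⟩ := schur_pow_entry_bound hL₀
  set F := A - B * L₀ with hF
  set S := Q + L₀ᵀ * R * L₀ with hS
  have hstep : ∀ (k : ℕ) (x : Fin n → ℝ),
      x ⬝ᵥ P (k + 1) *ᵥ x ≤ (F *ᵥ x) ⬝ᵥ P k *ᵥ (F *ᵥ x) + x ⬝ᵥ S *ᵥ x := by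
    intro k x
    have h1 := (ric_le (A := A) (Q := Q) (B := B) hR (hpsd k) L₀).quad x
    rw [← hPrec' k] at h1
    have e : x ⬝ᵥ (Fᵀ * P k * F + Q + L₀ᵀ * R * L₀) *ᵥ x
        = (F *ᵥ x) ⬝ᵥ P k *ᵥ (F *ᵥ x) + x ⬝ᵥ S *ᵥ x := by
      rw [Matrix.add_mulVec, Matrix.add_mulVec, dotProduct_add, dotProduct_add,
        quad_conj_vec_real, hS, Matrix.add_mulVec, dotProduct_add]
      ring
    rw [e] at h1
    exact h1
  have hunroll : ∀ (k : ℕ) (x : Fin n → ℝ), x ⬝ᵥ P k *ᵥ x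
      ≤ ((F ^ k) *ᵥ x) ⬝ᵥ Q *ᵥ ((F ^ k) *ᵥ x)
        + ∑ j ∈ Finset.range k, ((F ^ j) *ᵥ x) ⬝ᵥ S *ᵥ ((F ^ j) *ᵥ x) := by
    intro k
    induction k with
    | zero => intro x; simp [hP0]
    | succ k ih =>
      intro x
      have h1 := hstep k x
      have h2 := ih (F *ᵥ x)
      have e1 : ∀ j : ℕ, (F ^ j) *ᵥ (F *ᵥ x) = (F ^ (j + 1)) *ᵥ x := by
        intro j; rw [Matrix.mulVec_mulVec, ← pow_succ]
      simp only [e1] at h2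
      have e2 : ∑ j ∈ Finset.range k, ((F ^ (j + 1)) *ᵥ x) ⬝ᵥ S *ᵥ ((F ^ (j + 1)) *ᵥ x)
            + x ⬝ᵥ S *ᵥ x
          = ∑ j ∈ Finset.range (k + 1), ((F ^ j) *ᵥ x) ⬝ᵥ S *ᵥ ((F ^ j) *ᵥ x) := by
        rw [Finset.sum_range_succ']
        simp
      calc x ⬝ᵥ P (k + 1) *ᵥ x ≤ (F *ᵥ x) ⬝ᵥ P k *ᵥ (F *ᵥ x) + x ⬝ᵥ S *ᵥ x := h1
      _ ≤ (((F ^ (k + 1)) *ᵥ x) ⬝ᵥ Q *ᵥ ((F ^ (k + 1)) *ᵥ x)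
            + ∑ j ∈ Finset.range k, ((F ^ (j + 1)) *ᵥ x) ⬝ᵥ S *ᵥ ((F ^ (j + 1)) *ᵥ x))
            + x ⬝ᵥ S *ᵥ x := add_le_add_left h2 _
      _ = _ := by rw [add_assoc, e2]
  have hnQ0 : (0:ℝ) ≤ ∑ i, ∑ j, |Q i j| :=
    Finset.sum_nonneg fun i _ => Finset.sum_nonneg fun j _ => abs_nonneg _
  have hnS0 : (0:ℝ) ≤ ∑ i, ∑ j, |S i j| :=
    Finset.sum_nonneg fun i _ => Finset.sum_nonneg fun j _ => abs_nonneg _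
  have hr2 : r ^ 2 < 1 := by nlinarith
  have hub : ∀ (k : ℕ) (x : Fin n → ℝ), x ⬝ᵥ P k *ᵥ x
      ≤ ((∑ i, ∑ j, |Q i j|) * c ^ 2 + (∑ i, ∑ j, |S i j|) * c ^ 2 * (1 - r ^ 2)⁻¹)
        * (∑ j, |x j|) ^ 2 := by
    intro k x
    have hsnn : (0:ℝ) ≤ ∑ j, |x j| := Finset.sum_nonneg fun j _ => abs_nonneg _
    have t1 : ((F ^ k) *ᵥ x) ⬝ᵥ Q *ᵥ ((F ^ k) *ᵥ x)
        ≤ (∑ i, ∑ j, |Q i j|) * (c * r ^ k * (∑ j, |x j|)) ^ 2 :=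
      (le_abs_self _).trans (quad_abs_le _ _ _ (by positivity) (mulVec_pow_abs_le hb k x))
    have t1' : (∑ i, ∑ j, |Q i j|) * (c * r ^ k * (∑ j, |x j|)) ^ 2
        ≤ (∑ i, ∑ j, |Q i j|) * c ^ 2 * (∑ j, |x j|) ^ 2 := by
      have h1 : (c * r ^ k * (∑ j, |x j|)) ^ 2
          = c ^ 2 * (∑ j, |x j|) ^ 2 * (r ^ 2) ^ k := by ring
      have h2 : (r ^ 2) ^ k ≤ 1 := pow_le_one₀ (by positivity) hr2.le
      have h3 : c ^ 2 * (∑ j, |x j|) ^ 2 * (r ^ 2) ^ k ≤ c ^ 2 * (∑ j, |x j|) ^ 2 := by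
        nlinarith [sq_nonneg c, sq_nonneg (∑ j, |x j|), mul_nonneg (sq_nonneg c) (sq_nonneg (∑ j, |x j|))]
      calc (∑ i, ∑ j, |Q i j|) * (c * r ^ k * (∑ j, |x j|)) ^ 2
          = (∑ i, ∑ j, |Q i j|) * (c ^ 2 * (∑ j, |x j|) ^ 2 * (r ^ 2) ^ k) := by rw [h1]
      _ ≤ (∑ i, ∑ j, |Q i j|) * (c ^ 2 * (∑ j, |x j|) ^ 2) :=
          mul_le_mul_of_nonneg_left h3 hnQ0
      _ = (∑ i, ∑ j, |Q i j|) * c ^ 2 * (∑ j, |x j|) ^ 2 := by ring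
    have t2 : ∑ j ∈ Finset.range k, ((F ^ j) *ᵥ x) ⬝ᵥ S *ᵥ ((F ^ j) *ᵥ x)
        ≤ (∑ i, ∑ j, |S i j|) * c ^ 2 * (∑ j, |x j|) ^ 2 * (1 - r ^ 2)⁻¹ := by
      have hterm : ∀ j ∈ Finset.range k, ((F ^ j) *ᵥ x) ⬝ᵥ S *ᵥ ((F ^ j) *ᵥ x)
          ≤ ((∑ i, ∑ j, |S i j|) * c ^ 2 * (∑ j, |x j|) ^ 2) * (r ^ 2) ^ j := by
        intro j _
        have h0 := (le_abs_self _).trans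
          (quad_abs_le S _ _ (by positivity) (mulVec_pow_abs_le hb j x))
        calc ((F ^ j) *ᵥ x) ⬝ᵥ S *ᵥ ((F ^ j) *ᵥ x)
            ≤ (∑ i, ∑ j, |S i j|) * (c * r ^ j * (∑ j, |x j|)) ^ 2 := h0
        _ = ((∑ i, ∑ j, |S i j|) * c ^ 2 * (∑ j, |x j|) ^ 2) * (r ^ 2) ^ j := by ring
      calc ∑ j ∈ Finset.range k, ((F ^ j) *ᵥ x) ⬝ᵥ S *ᵥ ((F ^ j) *ᵥ x)
          ≤ ∑ j ∈ Finset.range k,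
            ((∑ i, ∑ j, |S i j|) * c ^ 2 * (∑ j, |x j|) ^ 2) * (r ^ 2) ^ j :=
          Finset.sum_le_sum hterm
      _ = ((∑ i, ∑ j, |S i j|) * c ^ 2 * (∑ j, |x j|) ^ 2)
            * ∑ j ∈ Finset.range k, (r ^ 2) ^ j := by rw [Finset.mul_sum]
      _ ≤ ((∑ i, ∑ j, |S i j|) * c ^ 2 * (∑ j, |x j|) ^ 2) * (1 - r ^ 2)⁻¹ := by
          apply mul_le_mul_of_nonneg_left (geom_bound (by positivity) hr2 k)
          exact mul_nonneg (mul_nonneg hnS0 (by positivity)) (by positivity)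
    have h4 := (hunroll k x).trans (add_le_add (t1.trans t1') t2)
    calc x ⬝ᵥ P k *ᵥ x
        ≤ (∑ i, ∑ j, |Q i j|) * c ^ 2 * (∑ j, |x j|) ^ 2
          + (∑ i, ∑ j, |S i j|) * c ^ 2 * (∑ j, |x j|) ^ 2 * (1 - r ^ 2)⁻¹ := h4
    _ = ((∑ i, ∑ j, |Q i j|) * c ^ 2 + (∑ i, ∑ j, |S i j|) * c ^ 2 * (1 - r ^ 2)⁻¹)
          * (∑ j, |x j|) ^ 2 := by ring
  have humono : ∀ x : Fin n → ℝ, Monotone fun k => x ⬝ᵥ P k *ᵥ x := fun x =>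
    monotone_nat_of_le_succ fun k => (hmono k).quad x
  have hbdd : ∀ x : Fin n → ℝ, BddAbove (Set.range fun k => x ⬝ᵥ P k *ᵥ x) := by
    intro x
    refine ⟨((∑ i, ∑ j, |Q i j|) * c ^ 2 + (∑ i, ∑ j, |S i j|) * c ^ 2 * (1 - r ^ 2)⁻¹)
        * (∑ j, |x j|) ^ 2, ?_⟩
    rintro y ⟨k, rfl⟩
    exact hub k x
  have hqt : ∀ x : Fin n → ℝ,
      Tendsto (fun k => x ⬝ᵥ P k *ᵥ x) atTop (𝓝 (⨆ k, x ⬝ᵥ P k *ᵥ x)) :=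
    fun x => tendsto_atTop_ciSup (humono x) (hbdd x)
  set X : Matrix (Fin n) (Fin n) ℝ := Matrix.of fun i j =>
    ((⨆ k, (Pi.single i 1 + Pi.single j 1) ⬝ᵥ P k *ᵥ (Pi.single i 1 + Pi.single j 1))
      - (⨆ k, Pi.single i 1 ⬝ᵥ P k *ᵥ Pi.single i 1)
      - (⨆ k, Pi.single j 1 ⬝ᵥ P k *ᵥ Pi.single j 1)) / 2 with hX
  have hentry : ∀ i j, Tendsto (fun k => P k i j) atTop (𝓝 (X i j)) := by
    intro i j
    have h1 := (((hqt (Pi.single i 1 + Pi.single j 1)).sub (hqt (Pi.single i 1))).sub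
      (hqt (Pi.single j 1))).div_const 2
    refine Filter.Tendsto.congr (fun k => ?_) h1
    exact (quad_single (hsymP k) i j).symm
  have hXtend : Tendsto P atTop (𝓝 X) := by
    apply tendsto_pi_nhds.mpr
    intro i
    apply tendsto_pi_nhds.mpr
    intro j
    exact hentry i j
  have hquadX : ∀ x : Fin n → ℝ,
      Tendsto (fun k => x ⬝ᵥ P k *ᵥ x) atTop (𝓝 (x ⬝ᵥ X *ᵥ x)) := by
    intro x
    have hcont : Continuous fun M : Matrix (Fin n) (Fin n) ℝ => x ⬝ᵥ M *ᵥ x :=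
      continuous_const.dotProduct (Continuous.matrix_mulVec continuous_id
        continuous_const)
    exact (hcont.tendsto X).comp hXtend
  have hXpsd : X.PosSemidef := by
    refine Matrix.PosSemidef.of_dotProduct_mulVec_nonneg ?_ ?_
    · show Xᴴ = X
      have hsymX : Xᵀ = X := by
        ext i j
        show X j i = X i j
        simp only [hX, Matrix.of_apply]
        rw [add_comm (Pi.single j 1)]
        ring
      rw [conjTranspose_eq_transpose_of_trivial, hsymX]
    · intro x
      rw [star_trivial]
      exact ge_of_tendsto (hquadX x)
        (Filter.Eventually.of_forall fun k => quad_nonneg (hpsd k) x)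
  have hWcont : Continuous fun M : Matrix (Fin n) (Fin n) ℝ => Bᵀ * M * B + R :=
    ((continuous_const.matrix_mul continuous_id).matrix_mul continuous_const).add
      continuous_const
  have hWtend : Tendsto (fun k => Bᵀ * P k * B + R) atTop (𝓝 (Bᵀ * X * B + R)) :=
    (hWcont.tendsto X).comp hXtend
  have hWXpd : (Bᵀ * X * B + R).PosDef := Wm_posDef (B := B) hR hXpsd
  have hdetX : (Bᵀ * X * B + R).det ≠ 0 :=
    isUnit_iff_ne_zero.mp ((Matrix.isUnit_iff_isUnit_det _).mp hWXpd.isUnit)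
  have hinvtend : Tendsto (fun k => (Bᵀ * P k * B + R)⁻¹) atTop
      (𝓝 ((Bᵀ * X * B + R)⁻¹)) := by
    have hCA : ContinuousAt Inv.inv (Bᵀ * X * B + R) := by
      apply continuousAt_matrix_inv
      rw [Ring.inverse_eq_inv']
      exact continuousAt_inv₀ hdetX
    exact hCA.tendsto.comp hWtend
  have hφ : Continuous fun MN : Matrix (Fin n) (Fin n) ℝ × Matrix (Fin m) (Fin m) ℝ =>
      Aᵀ * MN.1 * A + Q - Aᵀ * MN.1 * B * MN.2 * (Bᵀ * MN.1 * A) := by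
    apply Continuous.sub
    · exact ((continuous_const.matrix_mul continuous_fst).matrix_mul continuous_const).add
        continuous_const
    · exact (((continuous_const.matrix_mul continuous_fst).matrix_mul
        continuous_const).matrix_mul continuous_snd).matrix_mul
        ((continuous_const.matrix_mul continuous_fst).matrix_mul continuous_const)
  have hRictend : Tendsto (fun k => Aᵀ * P k * A + Q
        - Aᵀ * P k * B * (Bᵀ * P k * B + R)⁻¹ * (Bᵀ * P k * A)) atTop
      (𝓝 (Aᵀ * X * A + Q - Aᵀ * X * B * (Bᵀ * X * B + R)⁻¹ * (Bᵀ * X * A))) := by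
    have h1 : Tendsto (fun k => (P k, (Bᵀ * P k * B + R)⁻¹)) atTop
        (𝓝 (X, (Bᵀ * X * B + R)⁻¹)) := hXtend.prodMk_nhds hinvtend
    have h2 := (hφ.tendsto (X, (Bᵀ * X * B + R)⁻¹)).comp h1
    exact h2.congr fun k => rfl
  have hXfix : X = Aᵀ * X * A + Q - Aᵀ * X * B * (Bᵀ * X * B + R)⁻¹ * (Bᵀ * X * A) := by
    have h1 : Tendsto (fun k => P (k + 1)) atTop (𝓝 X) :=
      hXtend.comp (tendsto_add_atTop_nat 1)
    have h2 : Tendsto (fun k => P (k + 1)) atTop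
        (𝓝 (Aᵀ * X * A + Q - Aᵀ * X * B * (Bᵀ * X * B + R)⁻¹ * (Bᵀ * X * A))) :=
      hRictend.congr fun k => (hPrec k).symm
    exact tendsto_nhds_unique h1 h2
  have hXfix' : X = Ric A Q B R X := hXfix
  have hstable : SchurStable (A - B * Km A B R X) := by
    apply closed_loop_stable hQ hR hdet hXpsd
    exact hXfix'.trans (ric_closed_loop hR hXpsd)
  have hKmX : (R + Bᵀ * X * B)⁻¹ * (Bᵀ * X * A) = Km A B R X := by
    rw [Km, add_comm R]
  refine ⟨X, ⟨hXpsd, hXfix, ?_⟩, ?_, hXtend, ?_⟩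
  · rw [hKmX]; exact hstable
  · rintro X' ⟨hX'psd, hX'fix, hX'stable⟩
    have hKmX' : (R + Bᵀ * X' * B)⁻¹ * (Bᵀ * X' * A) = Km A B R X' := by
      rw [Km, add_comm R]
    rw [hKmX'] at hX'stable
    exact dare_unique hR hXpsd hX'psd hXfix' hX'fix hstable hX'stable
  · have hψ : Continuous fun MN : Matrix (Fin n) (Fin n) ℝ × Matrix (Fin m) (Fin m) ℝ =>
        MN.2 * (Bᵀ * MN.1 * A) :=
      continuous_snd.matrix_mul
        ((continuous_const.matrix_mul continuous_fst).matrix_mul continuous_const)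
    have h1 : Tendsto (fun k => (Bᵀ * P k * B + R)⁻¹ * (Bᵀ * P k * A)) atTop
        (𝓝 ((Bᵀ * X * B + R)⁻¹ * (Bᵀ * X * A))) :=
      ((hψ.tendsto (X, (Bᵀ * X * B + R)⁻¹)).comp
        (hXtend.prodMk_nhds hinvtend)).congr fun k => rfl
    have e : (fun k => (R + Bᵀ * P k * B)⁻¹ * (Bᵀ * P k * A))
        = fun k => (Bᵀ * P k * B + R)⁻¹ * (Bᵀ * P k * A) := by
      funext k; rw [add_comm R]
    have e2 : (Bᵀ * X * B + R)⁻¹ * (Bᵀ * X * A)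
        = (R + Bᵀ * X * B)⁻¹ * (Bᵀ * X * A) := by rw [add_comm R]
    rw [e, ← e2]
    exact h1
end
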